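/- Let G be a Young function whose derivative g satisfies p⁻ ≤ t·g(t)/G(t) ≤ p⁺ for all t > 0 with 1 < p⁻ ≤ p⁺. Then for all a > 0 and 0 < t < 1 it holds that (p⁻/p⁺) g(a) t^{p⁺ - 1} ≤ g(at) ≤ (p⁺/p⁻) g(a) t^{p⁻ - 1}. -/

import Mathlib

open Real Set Filter

theorem g_scaling_estimate
    (G g : ℝ → ℝ) (pm pp : ℝ)
    (hEven : ∀ t, G (-t) = G t)
    (hConv : ConvexOn ℝ univ G)
    (hMono : StrictMonoOn G (Ioi 0))
    (hG0 : G 0 = 0)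
    (hderiv : ∀ t > 0, HasDerivAt G (g t) t)
    (hp : 1 < pm) (hpm : pm ≤ pp)
    (hgrowth : ∀ t > 0, pm ≤ t * g t / G t ∧ t * g t / G t ≤ pp) :
    ∀ a > 0, ∀ t, 0 < t → t < 1 →
      (pm / pp) * g a * t ^ (pp - 1) ≤ g (a * t) ∧
      g (a * t) ≤ (pp / pm) * g a * t ^ (pm - 1) := by
  have hpm0 : (0:ℝ) < pm := lt_trans one_pos hp
  have hpp0 : (0:ℝ) < pp := lt_of_lt_of_le hpm0 hpm
  -- G is nonnegative
  have hGnn : ∀ s, 0 ≤ G s := by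
    intro s
    have h := hConv.2 (mem_univ s) (mem_univ (-s))
      (by norm_num : (0:ℝ) ≤ 1/2) (by norm_num : (0:ℝ) ≤ 1/2) (by norm_num)
    simp only [smul_eq_mul] at h
    have hz : (1/2:ℝ) * s + (1/2) * (-s) = 0 := by ring
    rw [hz, hG0, hEven] at h
    linarith
  -- G is positive on (0,∞)
  have hGpos : ∀ s, 0 < s → 0 < G s := by
    intro s hs
    rcases (hGnn s).lt_or_eq with h | h
    · exact h
    · exfalso
      have := (hgrowth s hs).1
      rw [← h, div_zero] at this
      linarith
  -- key pointwise bounds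
  have hlow : ∀ s, 0 < s → pm * G s ≤ s * g s := by
    intro s hs
    exact (le_div_iff₀ (hGpos s hs)).mp (hgrowth s hs).1
  have hhigh : ∀ s, 0 < s → s * g s ≤ pp * G s := by
    intro s hs
    exact (div_le_iff₀ (hGpos s hs)).mp (hgrowth s hs).2
  -- derivative of log(G s) - q * log s
  have hasH : ∀ (q : ℝ) (s : ℝ), 0 < s →
      HasDerivAt (fun x => Real.log (G x) - q * Real.log x) (g s / G s - q / s) s := by
    intro q s hs
    have h1 : HasDerivAt (fun x => Real.log (G x)) (g s / G s) s :=
      (hderiv s hs).log (hGpos s hs).ne'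
    have h2 : HasDerivAt (fun x => q * Real.log x) (q * s⁻¹) s :=
      (Real.hasDerivAt_log hs.ne').const_mul q
    have h := h1.sub h2
    rw [div_eq_mul_inv q s]
    exact h
  have hint : interior (Ioi (0:ℝ)) = Ioi 0 := interior_Ioi
  have hcont : ∀ q : ℝ, ContinuousOn (fun x => Real.log (G x) - q * Real.log x) (Ioi 0) :=
    fun q s hs => (hasH q s hs).continuousAt.continuousWithinAt
  have hdiff : ∀ q : ℝ, DifferentiableOn ℝ (fun x => Real.log (G x) - q * Real.log x)
      (interior (Ioi 0)) := by
    intro q s hs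
    rw [hint] at hs
    exact (hasH q s hs).differentiableAt.differentiableWithinAt
  -- monotone: q = pm
  have hmono1 : MonotoneOn (fun x => Real.log (G x) - pm * Real.log x) (Ioi 0) := by
    apply monotoneOn_of_deriv_nonneg (convex_Ioi 0) (hcont pm) (hdiff pm)
    intro x hx
    rw [hint] at hx
    rw [(hasH pm x hx).deriv]
    have hGx := hGpos x hx
    have hk := hlow x hx
    have : pm / x ≤ g x / G x := (div_le_div_iff₀ hx hGx).mpr (by linarith)
    linarith
  -- antitone: q = pp
  have hanti : AntitoneOn (fun x => Real.log (G x) - pp * Real.log x) (Ioi 0) := by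
    apply antitoneOn_of_deriv_nonpos (convex_Ioi 0) (hcont pp) (hdiff pp)
    intro x hx
    rw [hint] at hx
    rw [(hasH pp x hx).deriv]
    have hGx := hGpos x hx
    have hk := hhigh x hx
    have : g x / G x ≤ pp / x := (div_le_div_iff₀ hGx hx).mpr (by linarith)
    linarith
  intro a ha t ht ht1
  have hat : 0 < a * t := mul_pos ha ht
  have hle : a * t ≤ a := by nlinarith
  have hlogat : Real.log (a * t) = Real.log a + Real.log t :=
    Real.log_mul ha.ne' ht.ne'
  have hGa := hGpos a ha
  have hGat := hGpos (a * t) hat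
  have htpm : (0:ℝ) < t ^ pm := Real.rpow_pos_of_pos ht pm
  have htpp : (0:ℝ) < t ^ pp := Real.rpow_pos_of_pos ht pp
  -- upper bound on G(a t)
  have hGup : G (a * t) ≤ G a * t ^ pm := by
    have h := hmono1 (mem_Ioi.mpr hat) (mem_Ioi.mpr ha) hle
    simp only at h
    rw [hlogat] at h
    have hlog : Real.log (G (a * t)) ≤ Real.log (G a * t ^ pm) := by
      rw [Real.log_mul hGa.ne' htpm.ne', Real.log_rpow ht]
      linarith
    exact (Real.log_le_log_iff hGat (mul_pos hGa htpm)).mp hlog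
  -- lower bound on G(a t)
  have hGlo : G a * t ^ pp ≤ G (a * t) := by
    have h := hanti (mem_Ioi.mpr hat) (mem_Ioi.mpr ha) hle
    simp only at h
    rw [hlogat] at h
    have hlog : Real.log (G a * t ^ pp) ≤ Real.log (G (a * t)) := by
      rw [Real.log_mul hGa.ne' htpp.ne', Real.log_rpow ht]
      linarith
    exact (Real.log_le_log_iff (mul_pos hGa htpp) hGat).mp hlog
  have h1 := hlow (a * t) hat
  have h1' := hhigh (a * t) hat
  have h2 := hlow a ha
  have h2' := hhigh a ha
  constructor
  · -- lower bound for g(a t)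
    have key : pm * (a * g a * t ^ pp) ≤ pp * ((a * t) * g (a * t)) := by
      nlinarith [mul_le_mul_of_nonneg_right h2' htpp.le,
        mul_le_mul_of_nonneg_left hGlo (mul_pos hpm0 hpp0).le,
        mul_le_mul_of_nonneg_left h1 hpp0.le]
    have heq : (pm / pp) * g a * t ^ (pp - 1) = (pm * (a * g a * t ^ pp)) / (pp * (a * t)) := by
      rw [Real.rpow_sub ht, Real.rpow_one]
      field_simp
    rw [heq]
    rw [div_le_iff₀ (by positivity)]
    nlinarith [key]
  · -- upper bound for g(a t)
    have key : pm * ((a * t) * g (a * t)) ≤ pp * (a * g a * t ^ pm) := by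
      nlinarith [mul_le_mul_of_nonneg_right h2 htpm.le,
        mul_le_mul_of_nonneg_left hGup (mul_pos hpm0 hpp0).le,
        mul_le_mul_of_nonneg_left h1' hpp0.le]
    have heq : (pp / pm) * g a * t ^ (pm - 1) = (pp * (a * g a * t ^ pm)) / (pm * (a * t)) := by
      rw [Real.rpow_sub ht, Real.rpow_one]
      field_simp
    rw [heq]
    rw [le_div_iff₀ (by positivity)]
    nlinarith [key]
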